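/- arXiv:1511.02447 — 2 statements merged into one kernel-verified Lean document; each statement's English description precedes it below -/
import Mathlib

section
/- Let A be a weighted shift on ℓ²(ℕ₀) with A e_n = c(n) e_{n+l} where c(n)² ≤ (n+k)^k (k ≥ 1, l ∈ ℤ, c(n)=0 for invalid indices), and let A_M := P_M A P_M where P_M is the orthogonal projection onto span{e_n : 0 ≤ n ≤ M}. Then for all β ≥ 0 and M ≥ k, the operator norm of A − A_M from the (β + k/2 + r)-weighted space to the β-weighted space is at most k^{k/2}(k+1)^β (M−k+2)^{−r} for every r ≥ 0; in particular if r > 0 then (A − A_M)φ → 0 in β-norm as M → ∞ for every φ in the (β+k/2+r)-weighted space. -/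
/-- The weighted shift `A e_n = c(n) e_{n+l}` acting on sequences. -/
noncomputable def shiftOp (l : ℤ) (c : ℤ → ℝ) (f : ℕ → ℂ) : ℕ → ℂ :=
  fun m => if 0 ≤ (m : ℤ) - l then ((c ((m : ℤ) - l) : ℝ) : ℂ) * f ((m : ℤ) - l).toNat else 0

/-- The level-`M` truncation `A_M = P_M A P_M` of the weighted shift. -/
noncomputable def shiftOpTrunc (M : ℕ) (l : ℤ) (c : ℤ → ℝ) (f : ℕ → ℂ) : ℕ → ℂ :=
  fun m => if m ≤ M ∧ 0 ≤ (m : ℤ) - l ∧ (m : ℤ) - l ≤ (M : ℤ) then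
    ((c ((m : ℤ) - l) : ℝ) : ℂ) * f ((m : ℤ) - l).toNat else 0

lemma aux_shift_tsum (a : ℤ) (g : ℕ → ℝ) (hg : Summable g) (hgnn : ∀ n, 0 ≤ g n) :
    Summable (fun m : ℕ => if 0 ≤ (m : ℤ) - a then g ((m : ℤ) - a).toNat else 0) ∧
    (∑' m : ℕ, if 0 ≤ (m : ℤ) - a then g ((m : ℤ) - a).toNat else 0) ≤ ∑' n, g n := by
  rcases le_or_gt a 0 with ha | ha
  · set b := (-a).toNat with hb
    have hGe : (fun m : ℕ => if 0 ≤ (m : ℤ) - a then g ((m : ℤ) - a).toNat else 0)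
        = fun m : ℕ => g (m + b) := by
      funext m
      rw [if_pos (by omega)]
      congr 1
      omega
    rw [hGe]
    constructor
    · exact hg.comp_injective (add_left_injective b)
    · exact tsum_comp_le_tsum_of_inj hg hgnn (add_left_injective b)
  · set b := a.toNat with hb
    have hkey : ∀ n : ℕ, (if 0 ≤ ((n + b : ℕ) : ℤ) - a then g (((n + b : ℕ) : ℤ) - a).toNat else 0)
        = g n := by
      intro n
      rw [if_pos (by omega)]
      congr 1
      omega
    have hsum : Summable (fun m : ℕ => if 0 ≤ (m : ℤ) - a then g ((m : ℤ) - a).toNat else 0) := by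
      rw [← summable_nat_add_iff b]
      simpa only [hkey] using hg
    refine ⟨hsum, ?_⟩
    have := hsum.sum_add_tsum_nat_add b
    have hzero : ∀ i ∈ Finset.range b,
        (if 0 ≤ (i : ℤ) - a then g ((i : ℤ) - a).toNat else 0) = 0 := by
      intro i hi
      rw [if_neg (by simp at hi; omega)]
    rw [← this, Finset.sum_eq_zero hzero, zero_add]
    simp only [hkey]
    exact le_rfl

lemma aux_pointwise (l : ℤ) (k M : ℕ) (hk : 1 ≤ k) (hl : l.natAbs ≤ k) (hM : k ≤ M)
    (β r : ℝ) (hβ : 0 ≤ β) (hr : 0 ≤ r) (c : ℤ → ℝ)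
    (hcnn : ∀ n : ℤ, 0 ≤ c n)
    (hc : ∀ n : ℤ, 0 ≤ n → c n ^ 2 ≤ ((n : ℝ) + (k : ℝ)) ^ k)
    (f : ℕ → ℂ) (m : ℕ) :
    ‖shiftOp l c f m - shiftOpTrunc M l c f m‖ ^ 2 * (1 + (m : ℝ)) ^ (2 * β)
      ≤ ((k : ℝ) ^ (k : ℕ) * ((k : ℝ) + 1) ^ (2 * β) * ((M : ℝ) - (k : ℝ) + 2) ^ (-(2 * r))) *
        (if 0 ≤ (m : ℤ) - l then
          ‖f ((m : ℤ) - l).toNat‖ ^ 2 *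
            (1 + ((((m : ℤ) - l).toNat : ℕ) : ℝ)) ^ (2 * (β + (k : ℝ) / 2 + r))
        else 0) := by
  have hMk : (0:ℝ) < (M : ℝ) - (k : ℝ) + 2 := by
    have : (k : ℝ) ≤ (M : ℝ) := by exact_mod_cast hM
    linarith
  have hconst : 0 ≤ (k : ℝ) ^ (k : ℕ) * ((k : ℝ) + 1) ^ (2 * β) *
      ((M : ℝ) - (k : ℝ) + 2) ^ (-(2 * r)) := by positivity
  by_cases h1 : 0 ≤ (m : ℤ) - l
  · set nz := (m : ℤ) - l with hnzdef
    set n := nz.toNat with hndef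
    have hnz : ((n : ℕ) : ℤ) = nz := Int.toNat_of_nonneg h1
    by_cases h2 : m ≤ M ∧ 0 ≤ (m : ℤ) - l ∧ (m : ℤ) - l ≤ (M : ℤ)
    · have : shiftOp l c f m - shiftOpTrunc M l c f m = 0 := by
        simp only [shiftOp, shiftOpTrunc, if_pos (show 0 ≤ (m : ℤ) - l from h1), if_pos h2, sub_self]
      rw [this]
      simp only [norm_zero]
      rw [zero_pow (by norm_num), zero_mul]
      rw [if_pos h1]
      positivity
    · -- main case
      have hD : shiftOp l c f m - shiftOpTrunc M l c f m = ((c nz : ℝ) : ℂ) * f n := by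
        simp only [shiftOp, shiftOpTrunc, if_pos h1, if_neg h2, sub_zero, ← hnzdef, ← hndef,
          if_neg (show ¬(m ≤ M ∧ 0 ≤ nz ∧ nz ≤ (M : ℤ)) from h2)]
      rw [hD, if_pos h1]
      have hnormc : ‖((c nz : ℝ) : ℂ) * f n‖ = c nz * ‖f n‖ := by
        rw [norm_mul, Complex.norm_real, Real.norm_eq_abs, abs_of_nonneg (hcnn nz)]
      rw [hnormc, mul_pow]
      -- key index bound: M + 1 - k ≤ n
      have hnlb : (M : ℤ) + 1 - (k : ℤ) ≤ (n : ℤ) := by omega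
      set B : ℝ := 1 + (n : ℝ) with hBdef
      have hB1 : (1 : ℝ) ≤ B := by
        simp only [hBdef, le_add_iff_nonneg_right]; positivity
      have hBpos : (0 : ℝ) < B := by linarith
      have hMB : (M : ℝ) - (k : ℝ) + 2 ≤ B := by
        have : ((M : ℤ) + 1 - (k : ℤ) : ℤ) ≤ (n : ℤ) := hnlb
        have h' : (M : ℝ) + 1 - (k : ℝ) ≤ (n : ℝ) := by exact_mod_cast this
        simp only [hBdef]; linarith
      have hnzr : ((nz : ℤ) : ℝ) = (n : ℝ) := by exact_mod_cast hnz.symm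
      have hmr : (m : ℝ) = (n : ℝ) + (l : ℝ) := by
        have : (m : ℤ) = (n : ℤ) + l := by omega
        exact_mod_cast this
      have hlk : (l : ℝ) ≤ (k : ℝ) := by
        have : l ≤ (k : ℤ) := by omega
        exact_mod_cast this
      have hkR : (1 : ℝ) ≤ (k : ℝ) := by exact_mod_cast hk
      -- bound on c
      have hb1 : c nz ^ 2 ≤ (k : ℝ) ^ (k : ℕ) * B ^ (k : ℕ) := by
        have h := hc nz h1
        rw [hnzr] at h
        refine h.trans ?_
        rw [← mul_pow]
        refine pow_le_pow_left₀ (by positivity) ?_ k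
        simp only [hBdef]; nlinarith
      -- bound on weight
      have hb2 : (1 + (m : ℝ)) ^ (2 * β) ≤ ((k : ℝ) + 1) ^ (2 * β) * B ^ (2 * β) := by
        rw [← Real.mul_rpow (by positivity) (by positivity)]
        refine Real.rpow_le_rpow (by positivity) ?_ (by positivity)
        rw [hmr]; simp only [hBdef]; nlinarith
      have hb3 : B ^ ((k : ℕ) : ℝ) * B ^ (2 * β)
          ≤ ((M : ℝ) - (k : ℝ) + 2) ^ (-(2 * r)) * B ^ (2 * (β + (k : ℝ) / 2 + r)) := by
        have he : B ^ ((k : ℕ) : ℝ) * B ^ (2 * β)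
            = B ^ (-(2 * r)) * B ^ (2 * (β + (k : ℝ) / 2 + r)) := by
          rw [← Real.rpow_add hBpos, ← Real.rpow_add hBpos]
          ring_nf
        rw [he]
        have := Real.rpow_le_rpow_of_nonpos hMk hMB (by linarith : -(2 * r) ≤ 0)
        exact mul_le_mul_of_nonneg_right this (by positivity)
      calc c nz ^ 2 * ‖f n‖ ^ 2 * (1 + (m : ℝ)) ^ (2 * β)
          ≤ ((k : ℝ) ^ (k : ℕ) * B ^ (k : ℕ)) * ‖f n‖ ^ 2 *
              (((k : ℝ) + 1) ^ (2 * β) * B ^ (2 * β)) := by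
            apply mul_le_mul (mul_le_mul_of_nonneg_right hb1 (by positivity)) hb2
              (by positivity) (by positivity)
        _ = ((k : ℝ) ^ (k : ℕ) * ((k : ℝ) + 1) ^ (2 * β)) *
              (‖f n‖ ^ 2 * (B ^ ((k : ℕ) : ℝ) * B ^ (2 * β))) := by
            rw [Real.rpow_natCast]; ring
        _ ≤ ((k : ℝ) ^ (k : ℕ) * ((k : ℝ) + 1) ^ (2 * β)) *
              (‖f n‖ ^ 2 * (((M : ℝ) - (k : ℝ) + 2) ^ (-(2 * r)) *
                B ^ (2 * (β + (k : ℝ) / 2 + r)))) := by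
            refine mul_le_mul_of_nonneg_left ?_ (by positivity)
            exact mul_le_mul_of_nonneg_left hb3 (by positivity)
        _ = ((k : ℝ) ^ (k : ℕ) * ((k : ℝ) + 1) ^ (2 * β) *
              ((M : ℝ) - (k : ℝ) + 2) ^ (-(2 * r))) *
              (‖f n‖ ^ 2 * B ^ (2 * (β + (k : ℝ) / 2 + r))) := by ring
  · have h2 : ¬(m ≤ M ∧ 0 ≤ (m : ℤ) - l ∧ (m : ℤ) - l ≤ (M : ℤ)) := by tauto
    have hD : shiftOp l c f m - shiftOpTrunc M l c f m = 0 := by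
      simp only [shiftOp, shiftOpTrunc, if_neg h1, if_neg h2, sub_zero]
    rw [hD, if_neg h1, mul_zero]
    simp only [norm_zero]
    rw [zero_pow (by norm_num), zero_mul]

/-- For the weighted shift by `l` (`|l| ≤ k`, `k ≥ 1`, `c(n)² ≤ (n+k)^k`,
`c(n)=0` for `n<0`) and `M ≥ k`, the `(β+k/2+r) → β` operator norm of `A − A_M`
is at most `k^{k/2}(k+1)^β (M−k+2)^{−r}`; in particular for `r > 0`,
`(A − A_M)f → 0` in `β`-norm as `M → ∞`. -/
theorem stmt_14 (l : ℤ) (k : ℕ) (hk : 1 ≤ k) (hl : l.natAbs ≤ k)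
    (β r : ℝ) (hβ : 0 ≤ β) (hr : 0 ≤ r) (c : ℤ → ℝ)
    (hc0 : ∀ n : ℤ, n < 0 → c n = 0) (hcnn : ∀ n : ℤ, 0 ≤ c n)
    (hc : ∀ n : ℤ, 0 ≤ n → c n ^ 2 ≤ ((n : ℝ) + (k : ℝ)) ^ k)
    (f : ℕ → ℂ)
    (hf : Summable fun n : ℕ =>
      ‖f n‖ ^ 2 * (1 + (n : ℝ)) ^ (2 * (β + (k : ℝ) / 2 + r))) :
    (∀ M : ℕ, k ≤ M →
      Real.sqrt (∑' m : ℕ,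
          ‖shiftOp l c f m - shiftOpTrunc M l c f m‖ ^ 2 * (1 + (m : ℝ)) ^ (2 * β))
        ≤ (k : ℝ) ^ ((k : ℝ) / 2) * ((k : ℝ) + 1) ^ β * ((M : ℝ) - (k : ℝ) + 2) ^ (-r) *
          Real.sqrt (∑' n : ℕ,
            ‖f n‖ ^ 2 * (1 + (n : ℝ)) ^ (2 * (β + (k : ℝ) / 2 + r)))) ∧
    (0 < r → Filter.Tendsto
      (fun M : ℕ => ∑' m : ℕ,
        ‖shiftOp l c f m - shiftOpTrunc M l c f m‖ ^ 2 * (1 + (m : ℝ)) ^ (2 * β))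
      Filter.atTop (nhds 0)) := by
  classical
  have hgnn : ∀ n : ℕ, 0 ≤ ‖f n‖ ^ 2 * (1 + (n : ℝ)) ^ (2 * (β + (k : ℝ) / 2 + r)) :=
    fun n => by positivity
  obtain ⟨hGsum, hGle⟩ := aux_shift_tsum l
    (fun n : ℕ => ‖f n‖ ^ 2 * (1 + (n : ℝ)) ^ (2 * (β + (k : ℝ) / 2 + r))) hf hgnn
  have hS0 : (0:ℝ) ≤ ∑' n : ℕ, ‖f n‖ ^ 2 * (1 + (n : ℝ)) ^ (2 * (β + (k : ℝ) / 2 + r)) :=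
    tsum_nonneg hgnn
  -- central squared bound
  have hbound : ∀ M : ℕ, k ≤ M →
      (∑' m : ℕ, ‖shiftOp l c f m - shiftOpTrunc M l c f m‖ ^ 2 * (1 + (m : ℝ)) ^ (2 * β))
      ≤ ((k : ℝ) ^ (k : ℕ) * ((k : ℝ) + 1) ^ (2 * β) * ((M : ℝ) - (k : ℝ) + 2) ^ (-(2 * r))) *
        ∑' n : ℕ, ‖f n‖ ^ 2 * (1 + (n : ℝ)) ^ (2 * (β + (k : ℝ) / 2 + r)) := by
    intro M hM
    have hpt := fun m => aux_pointwise l k M hk hl hM β r hβ hr c hcnn hc f m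
    have hCs : Summable (fun m : ℕ =>
        ((k : ℝ) ^ (k : ℕ) * ((k : ℝ) + 1) ^ (2 * β) * ((M : ℝ) - (k : ℝ) + 2) ^ (-(2 * r))) *
        (if 0 ≤ (m : ℤ) - l then
          ‖f ((m : ℤ) - l).toNat‖ ^ 2 *
            (1 + ((((m : ℤ) - l).toNat : ℕ) : ℝ)) ^ (2 * (β + (k : ℝ) / 2 + r))
        else 0)) := hGsum.mul_left _
    have hts : Summable (fun m : ℕ =>
        ‖shiftOp l c f m - shiftOpTrunc M l c f m‖ ^ 2 * (1 + (m : ℝ)) ^ (2 * β)) :=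
      Summable.of_nonneg_of_le (fun m => by positivity) hpt hCs
    calc (∑' m : ℕ, ‖shiftOp l c f m - shiftOpTrunc M l c f m‖ ^ 2 * (1 + (m : ℝ)) ^ (2 * β))
        ≤ ∑' m : ℕ,
          ((k : ℝ) ^ (k : ℕ) * ((k : ℝ) + 1) ^ (2 * β) * ((M : ℝ) - (k : ℝ) + 2) ^ (-(2 * r))) *
          (if 0 ≤ (m : ℤ) - l then
            ‖f ((m : ℤ) - l).toNat‖ ^ 2 *
              (1 + ((((m : ℤ) - l).toNat : ℕ) : ℝ)) ^ (2 * (β + (k : ℝ) / 2 + r))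
          else 0) := Summable.tsum_le_tsum hpt hts hCs
      _ = ((k : ℝ) ^ (k : ℕ) * ((k : ℝ) + 1) ^ (2 * β) * ((M : ℝ) - (k : ℝ) + 2) ^ (-(2 * r))) *
          ∑' m : ℕ, (if 0 ≤ (m : ℤ) - l then
            ‖f ((m : ℤ) - l).toNat‖ ^ 2 *
              (1 + ((((m : ℤ) - l).toNat : ℕ) : ℝ)) ^ (2 * (β + (k : ℝ) / 2 + r))
          else 0) := tsum_mul_left
      _ ≤ _ := by
          refine mul_le_mul_of_nonneg_left hGle ?_
          have hMk : (0:ℝ) ≤ (M : ℝ) - (k : ℝ) + 2 := by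
            have : (k : ℝ) ≤ (M : ℝ) := by exact_mod_cast hM
            linarith
          exact mul_nonneg (mul_nonneg (by positivity) (by positivity))
            (Real.rpow_nonneg hMk _)
  have hkpos : (0:ℝ) < (k : ℝ) := by exact_mod_cast hk
  constructor
  · intro M hM
    have hMk : (0:ℝ) < (M : ℝ) - (k : ℝ) + 2 := by
      have : (k : ℝ) ≤ (M : ℝ) := by exact_mod_cast hM
      linarith
    have hCsq : ((k : ℝ) ^ ((k : ℝ) / 2) * ((k : ℝ) + 1) ^ β * ((M : ℝ) - (k : ℝ) + 2) ^ (-r)) ^ 2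
        = (k : ℝ) ^ (k : ℕ) * ((k : ℝ) + 1) ^ (2 * β) * ((M : ℝ) - (k : ℝ) + 2) ^ (-(2 * r)) := by
      have hx : ((k : ℝ) ^ ((k : ℝ) / 2)) ^ 2 = (k : ℝ) ^ (k : ℕ) := by
        rw [sq, ← Real.rpow_add hkpos, ← Real.rpow_natCast (k : ℝ) k]
        congr 1; ring
      have hy : (((k : ℝ) + 1) ^ β) ^ 2 = ((k : ℝ) + 1) ^ (2 * β) := by
        rw [sq, ← Real.rpow_add (by positivity)]
        congr 1; ring
      have hz : (((M : ℝ) - (k : ℝ) + 2) ^ (-r)) ^ 2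
          = ((M : ℝ) - (k : ℝ) + 2) ^ (-(2 * r)) := by
        rw [sq, ← Real.rpow_add hMk]
        congr 1; ring
      rw [mul_pow, mul_pow, hx, hy, hz]
    have hC0 : 0 ≤ (k : ℝ) ^ ((k : ℝ) / 2) * ((k : ℝ) + 1) ^ β *
        ((M : ℝ) - (k : ℝ) + 2) ^ (-r) :=
      mul_nonneg (mul_nonneg (Real.rpow_nonneg hkpos.le _)
        (Real.rpow_nonneg (by positivity) _)) (Real.rpow_nonneg hMk.le _)
    calc Real.sqrt (∑' m : ℕ,
          ‖shiftOp l c f m - shiftOpTrunc M l c f m‖ ^ 2 * (1 + (m : ℝ)) ^ (2 * β))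
        ≤ Real.sqrt (((k : ℝ) ^ ((k : ℝ) / 2) * ((k : ℝ) + 1) ^ β *
            ((M : ℝ) - (k : ℝ) + 2) ^ (-r)) ^ 2 *
            ∑' n : ℕ, ‖f n‖ ^ 2 * (1 + (n : ℝ)) ^ (2 * (β + (k : ℝ) / 2 + r))) := by
          apply Real.sqrt_le_sqrt
          rw [hCsq]
          exact hbound M hM
      _ = _ := by
          rw [Real.sqrt_mul (sq_nonneg _), Real.sqrt_sq hC0]
  · intro hrpos
    have h0 : ∀ᶠ M : ℕ in Filter.atTop, (0:ℝ) ≤ ∑' m : ℕ,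
        ‖shiftOp l c f m - shiftOpTrunc M l c f m‖ ^ 2 * (1 + (m : ℝ)) ^ (2 * β) :=
      Filter.Eventually.of_forall fun M => tsum_nonneg fun m => by positivity
    have hub : ∀ᶠ M : ℕ in Filter.atTop,
        (∑' m : ℕ, ‖shiftOp l c f m - shiftOpTrunc M l c f m‖ ^ 2 * (1 + (m : ℝ)) ^ (2 * β))
        ≤ ((k : ℝ) ^ (k : ℕ) * ((k : ℝ) + 1) ^ (2 * β) * ((M : ℝ) - (k : ℝ) + 2) ^ (-(2 * r))) *
          ∑' n : ℕ, ‖f n‖ ^ 2 * (1 + (n : ℝ)) ^ (2 * (β + (k : ℝ) / 2 + r)) :=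
      Filter.eventually_atTop.2 ⟨k, fun M hM => hbound M hM⟩
    have hinf : Filter.Tendsto (fun M : ℕ => (M : ℝ) - (k : ℝ) + 2) Filter.atTop Filter.atTop := by
      simp only [sub_eq_add_neg]
      exact Filter.tendsto_atTop_add_const_right _ 2
        (Filter.tendsto_atTop_add_const_right _ (-(k:ℝ)) tendsto_natCast_atTop_atTop)
    have hrt : Filter.Tendsto (fun M : ℕ => ((M : ℝ) - (k : ℝ) + 2) ^ (-(2 * r)))
        Filter.atTop (nhds 0) :=
      (tendsto_rpow_neg_atTop (by linarith)).comp hinf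
    have hmain : Filter.Tendsto (fun M : ℕ =>
        ((k : ℝ) ^ (k : ℕ) * ((k : ℝ) + 1) ^ (2 * β) * ((M : ℝ) - (k : ℝ) + 2) ^ (-(2 * r))) *
        ∑' n : ℕ, ‖f n‖ ^ 2 * (1 + (n : ℝ)) ^ (2 * (β + (k : ℝ) / 2 + r)))
        Filter.atTop (nhds 0) := by
      have := (hrt.const_mul ((k : ℝ) ^ (k : ℕ) * ((k : ℝ) + 1) ^ (2 * β))).mul_const
        (∑' n : ℕ, ‖f n‖ ^ 2 * (1 + (n : ℝ)) ^ (2 * (β + (k : ℝ) / 2 + r)))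
      simpa [mul_assoc] using this
    exact squeeze_zero' h0 hub hmain
end

section
/- Let K be a Hilbert space, A ≥ I a self-adjoint operator, and C : ℝ → B(K) operator-norm continuous with C(t)D(A) ⊆ D(A) and [A, C(t)]A^{−1} bounded. If U(t,s) solves ∂_t U = C(t)U, U(s,s)=I, then for ψ₀ ∈ D(A) the quantity ‖A U(t,s)ψ₀‖ satisfies the bound ‖A U(t,s)ψ₀‖ ≤ exp( |∫_s^t [ (1/2)‖C(τ)+C(τ)*‖ + ‖[A,C(τ)]A^{−1}‖ ] dτ| ) · ‖Aψ₀‖. -/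
open scoped ComplexConjugate

/-- Let `A ≥ I` be a self-adjoint (symmetric, bijective) operator, `C(t)` bounded
operators preserving `D(A)` with `[A,C(t)]A^{−1}` bounded (realized by the bounded
operator `D t` with `D t x = A(C t (A⁻¹x)) − C t x`), and `U(t,s)` the evolution
solving `∂_t U = C(t)U`, `U(s,s) = I`. Then for `ψ₀ ∈ D(A)`,
`‖A U(t,s)ψ₀‖ ≤ exp(|∫_s^t ((1/2)‖C(τ)+C(τ)*‖ + ‖D(τ)‖) dτ|) ‖Aψ₀‖`. -/
theorem stmt_17 {K : Type*} [NormedAddCommGroup K] [InnerProductSpace ℂ K] [CompleteSpace K]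
    (A : K →ₗ[ℂ] K)
    (hsym : ∀ x y : K, (inner ℂ (A x) y : ℂ) = (inner ℂ x (A y) : ℂ))
    (hAI : ∀ x : K, ‖x‖ ^ 2 ≤ ((inner ℂ (A x) x : ℂ)).re)
    (Ainv : K →L[ℂ] K) (hAinv₁ : ∀ x, A (Ainv x) = x) (hAinv₂ : ∀ x, Ainv (A x) = x)
    (C : ℝ → K →L[ℂ] K) (hC : Continuous C)
    (D : ℝ → K →L[ℂ] K) (hD : Continuous D)
    (hDdef : ∀ (t : ℝ) (x : K), D t x = A ((C t) (Ainv x)) - (C t) x)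
    (U : ℝ → ℝ → K →L[ℂ] K)
    (hU : ∀ s t : ℝ, HasDerivAt (fun τ => U τ s) ((C t).comp (U t s)) t)
    (hU0 : ∀ s : ℝ, U s s = ContinuousLinearMap.id ℂ K) :
    ∀ (s t : ℝ) (ψ₀ : K),
      ‖A (U t s ψ₀)‖ ≤
        Real.exp |∫ τ in s..t,
            ((1 / 2) * ‖C τ + ContinuousLinearMap.adjoint (C τ)‖ + ‖D τ‖)| * ‖A ψ₀‖ := by
  intro s t ψ₀
  classical
  -- A is continuous, being the inverse of the bounded bijection Ainv
  set e : K ≃ₗ[ℂ] K :=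
    { toFun := Ainv, map_add' := Ainv.map_add, map_smul' := Ainv.map_smul,
      invFun := A, left_inv := hAinv₁, right_inv := hAinv₂ } with he
  set E := e.toContinuousLinearEquivOfContinuous Ainv.continuous with hE
  set Acl : K →L[ℂ] K := (E.symm : K →L[ℂ] K) with hAcl
  have hAcl' : ∀ x, Acl x = A x := fun x => rfl
  set f : ℝ → K := fun τ => Acl (U τ s ψ₀) with hf
  set f' : ℝ → K := fun τ => C τ (f τ) + D τ (f τ) with hf'
  -- the commutator identity : A (C t y) = C t (A y) + D t (A y)
  have hcomm : ∀ (τ : ℝ) (y : K), A ((C τ) y) = (C τ) (A y) + (D τ) (A y) := by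
    intro τ y
    have := hDdef τ (A y)
    rw [hAinv₂] at this
    rw [this]; abel
  have hfd : ∀ τ, HasDerivAt f (f' τ) τ := by
    intro τ
    have h1 : HasDerivAt (fun σ : ℝ => U σ s ψ₀) ((C τ) (U τ s ψ₀)) τ := by
      have h0 := (((ContinuousLinearMap.apply ℂ K ψ₀).hasFDerivAt.restrictScalars
        ℝ).comp_hasDerivAt τ (hU s τ))
      simpa [Function.comp_def] using h0
    have h2 : HasDerivAt f (Acl ((C τ) (U τ s ψ₀))) τ := by
      have h0 := ((Acl.hasFDerivAt (x := U τ s ψ₀)).restrictScalars ℝ).comp_hasDerivAt τ h1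
      simpa [Function.comp_def, hf] using h0
    have h3 : Acl ((C τ) (U τ s ψ₀)) = f' τ := by
      rw [hAcl', hcomm τ (U τ s ψ₀)]
      simp only [hf', hf]
      rw [hAcl' (U τ s ψ₀)]
    rwa [h3] at h2
  set g : ℝ → ℝ := fun τ => (1 / 2) * ‖C τ + ContinuousLinearMap.adjoint (C τ)‖ + ‖D τ‖
    with hg
  have hgc : Continuous g := by
    have h1 : Continuous fun τ => ContinuousLinearMap.adjoint (C τ) :=
      (ContinuousLinearMap.adjoint (𝕜 := ℂ) (E := K) (F := K)).continuous.comp hC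
    exact (continuous_const.mul ((hC.add h1).norm)).add hD.norm
  -- key pointwise bound
  have hkey : ∀ τ, |(inner ℂ (f τ) (f' τ) : ℂ).re| ≤ g τ * ‖f τ‖ ^ 2 := by
    intro τ
    set x := f τ with hx
    have hCx : |(inner ℂ x ((C τ) x) : ℂ).re| ≤
        ((1 / 2) * ‖C τ + ContinuousLinearMap.adjoint (C τ)‖) * ‖x‖ ^ 2 := by
      have h2 : (inner ℂ x ((C τ + ContinuousLinearMap.adjoint (C τ)) x) : ℂ).re
          = 2 * (inner ℂ x ((C τ) x) : ℂ).re := by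
        rw [ContinuousLinearMap.add_apply, inner_add_right,
          ContinuousLinearMap.adjoint_inner_right, Complex.add_re]
        have : (inner ℂ ((C τ) x) x : ℂ) = conj (inner ℂ x ((C τ) x) : ℂ) :=
          (inner_conj_symm _ _).symm
        rw [this, Complex.conj_re]; ring
      have h3 : |(inner ℂ x ((C τ + ContinuousLinearMap.adjoint (C τ)) x) : ℂ).re|
          ≤ ‖C τ + ContinuousLinearMap.adjoint (C τ)‖ * ‖x‖ ^ 2 := by
        calc |(inner ℂ x ((C τ + ContinuousLinearMap.adjoint (C τ)) x) : ℂ).re|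
            ≤ ‖(inner ℂ x ((C τ + ContinuousLinearMap.adjoint (C τ)) x) : ℂ)‖ :=
              Complex.abs_re_le_norm _
          _ ≤ ‖x‖ * ‖(C τ + ContinuousLinearMap.adjoint (C τ)) x‖ := norm_inner_le_norm _ _
          _ ≤ ‖x‖ * (‖C τ + ContinuousLinearMap.adjoint (C τ)‖ * ‖x‖) := by
              gcongr
              exact ContinuousLinearMap.le_opNorm _ _
          _ = ‖C τ + ContinuousLinearMap.adjoint (C τ)‖ * ‖x‖ ^ 2 := by ring
      rw [h2] at h3
      rw [abs_mul] at h3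
      simp only [abs_two] at h3
      linarith [abs_nonneg ((inner ℂ x ((C τ) x) : ℂ).re)]
    have hDx : |(inner ℂ x ((D τ) x) : ℂ).re| ≤ ‖D τ‖ * ‖x‖ ^ 2 := by
      calc |(inner ℂ x ((D τ) x) : ℂ).re| ≤ ‖(inner ℂ x ((D τ) x) : ℂ)‖ := Complex.abs_re_le_norm _
        _ ≤ ‖x‖ * ‖(D τ) x‖ := norm_inner_le_norm _ _
        _ ≤ ‖x‖ * (‖D τ‖ * ‖x‖) := by gcongr; exact ContinuousLinearMap.le_opNorm _ _
        _ = ‖D τ‖ * ‖x‖ ^ 2 := by ring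
    have : (inner ℂ x (f' τ) : ℂ).re = (inner ℂ x ((C τ) x) : ℂ).re + (inner ℂ x ((D τ) x) : ℂ).re := by
      simp only [hf']
      rw [inner_add_right, Complex.add_re]
    rw [this, hg]
    calc |(inner ℂ x ((C τ) x) : ℂ).re + (inner ℂ x ((D τ) x) : ℂ).re|
        ≤ |(inner ℂ x ((C τ) x) : ℂ).re| + |(inner ℂ x ((D τ) x) : ℂ).re| := abs_add_le _ _
      _ ≤ ((1 / 2) * ‖C τ + ContinuousLinearMap.adjoint (C τ)‖) * ‖x‖ ^ 2 + ‖D τ‖ * ‖x‖ ^ 2 :=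
          add_le_add hCx hDx
      _ = ((1 / 2) * ‖C τ + ContinuousLinearMap.adjoint (C τ)‖ + ‖D τ‖) * ‖x‖ ^ 2 := by ring
  -- r = ‖f‖² and its derivative
  set r : ℝ → ℝ := fun τ => ‖f τ‖ ^ 2 with hr
  set rd : ℝ → ℝ := fun τ => 2 * (inner ℂ (f τ) (f' τ) : ℂ).re with hrd
  have hrnn : ∀ τ, 0 ≤ r τ := fun τ => sq_nonneg _
  have hrda : ∀ τ, HasDerivAt r (rd τ) τ := by
    intro τ
    have h1 : HasDerivAt (fun σ => (inner ℂ (f σ) (f σ) : ℂ))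
        ((inner ℂ (f τ) (f' τ) : ℂ) + (inner ℂ (f' τ) (f τ) : ℂ)) τ :=
      HasDerivAt.inner ℂ (hfd τ) (hfd τ)
    have h2 := Complex.reCLM.hasFDerivAt.comp_hasDerivAt τ h1
    have hfun : (Complex.reCLM ∘ fun σ => (inner ℂ (f σ) (f σ) : ℂ)) = r := by
      funext σ
      simp only [Function.comp_apply, Complex.reCLM_apply, hr]
      exact inner_self_eq_norm_sq (𝕜 := ℂ) (f σ)
    have hval : Complex.reCLM ((inner ℂ (f τ) (f' τ) : ℂ) + (inner ℂ (f' τ) (f τ) : ℂ)) = rd τ := by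
      simp only [Complex.reCLM_apply, Complex.add_re, hrd]
      have : (inner ℂ (f' τ) (f τ) : ℂ) = conj (inner ℂ (f τ) (f' τ) : ℂ) :=
        (inner_conj_symm _ _).symm
      rw [this, Complex.conj_re]; ring
    rwa [hfun, hval] at h2
  -- the integral and its derivative
  set G : ℝ → ℝ := fun τ => ∫ σ in s..τ, g σ with hG
  have hGd : ∀ τ, HasDerivAt G (g τ) τ := by
    intro τ
    exact intervalIntegral.integral_hasDerivAt_right (hgc.intervalIntegrable _ _)
      (hgc.stronglyMeasurableAtFilter _ _) hgc.continuousAt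
  -- two monotone auxiliary functions
  have hanti : Antitone fun τ => r τ * Real.exp (-2 * G τ) := by
    apply antitone_of_deriv_nonpos
    · intro τ
      exact ((hrda τ).mul (((hGd τ).const_mul (-2)).exp)).differentiableAt
    · intro τ
      rw [((hrda τ).fun_mul (((hGd τ).const_mul (-2)).exp)).deriv]
      have h2 := Real.exp_pos (-2 * G τ)
      have h3 := abs_le.mp (hkey τ)
      have hb : rd τ ≤ 2 * (g τ * r τ) := by
        simp only [hrd, hr]; linarith [h3.2]
      have hbe := mul_le_mul_of_nonneg_right hb h2.le
      nlinarith [hbe]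
  have hmono : Monotone fun τ => r τ * Real.exp (2 * G τ) := by
    apply monotone_of_deriv_nonneg
    · intro τ
      exact ((hrda τ).mul (((hGd τ).const_mul (2)).exp)).differentiableAt
    · intro τ
      rw [((hrda τ).fun_mul (((hGd τ).const_mul (2)).exp)).deriv]
      have h2 := Real.exp_pos (2 * G τ)
      have h3 := abs_le.mp (hkey τ)
      have hb : -(2 * (g τ * r τ)) ≤ rd τ := by
        simp only [hrd, hr]; linarith [h3.1]
      have hbe := mul_le_mul_of_nonneg_right hb h2.le
      nlinarith [hbe]
  have hGs : G s = 0 := intervalIntegral.integral_same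
  -- reduce the goal to a statement about r
  have hfs : f s = A ψ₀ := by
    simp only [hf, hU0 s, ContinuousLinearMap.id_apply]
    exact hAcl' ψ₀
  have hft : f t = A (U t s ψ₀) := hAcl' _
  have main : ∀ c : ℝ, r t * Real.exp c ≤ r s → -c ≤ 2 * |G t| →
      r t ≤ Real.exp (2 * |G t|) * r s := by
    intro c h1 h2
    calc r t = (r t * Real.exp c) * Real.exp (-c) := by
          rw [mul_assoc, ← Real.exp_add]; simp
      _ ≤ r s * Real.exp (-c) := mul_le_mul_of_nonneg_right h1 (Real.exp_pos _).le
      _ ≤ r s * Real.exp (2 * |G t|) :=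
          mul_le_mul_of_nonneg_left (Real.exp_le_exp.2 h2) (hrnn s)
      _ = Real.exp (2 * |G t|) * r s := mul_comm _ _
  have hsq : r t ≤ Real.exp (2 * |G t|) * r s := by
    rcases le_total s t with h | h
    · have h1 := hanti h
      simp only [hGs, mul_zero, neg_zero, Real.exp_zero, mul_one, neg_mul] at h1
      refine main (-(2 * G t)) ?_ ?_
      · simpa using h1
      · simp only [neg_neg]
        have := le_abs_self (G t)
        linarith
    · have h1 := hmono h
      simp only [hGs, mul_zero, Real.exp_zero, mul_one] at h1
      refine main (2 * G t) h1 ?_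
      have := neg_abs_le (G t)
      linarith
  -- conclude
  rw [← hft, ← hfs]
  have hrt : ‖f t‖ = Real.sqrt (r t) := by
    rw [hr]; simp [Real.sqrt_sq (norm_nonneg _)]
  have hrhs : Real.exp |G t| * ‖f s‖ = Real.sqrt (Real.exp (2 * |G t|) * r s) := by
    rw [hr]
    rw [Real.sqrt_mul (Real.exp_pos _).le]
    rw [Real.sqrt_sq (norm_nonneg _)]
    congr 1
    rw [show (2 : ℝ) * |G t| = |G t| + |G t| by ring, Real.exp_add]
    exact (Real.sqrt_mul_self (Real.exp_pos _).le).symm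
  calc ‖f t‖ = Real.sqrt (r t) := hrt
    _ ≤ Real.sqrt (Real.exp (2 * |G t|) * r s) := Real.sqrt_le_sqrt hsq
    _ = Real.exp |G t| * ‖f s‖ := hrhs.symm
end
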